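/- Let $C_1$ and $C_2$ be two polyhedral cones in $\mathbb{R}^m$ that belong to a common fan (i.e., $C_1\cap C_2$ is a face of each) and suppose $C_1\cap C_2 = \{0\}$. Let $R>0$. If $C_1$ is strongly convex and generated by finitely many vectors $w_1,\dots,w_k$, then there exists $A>0$ such that for every point $x=\sum_{j=1}^k b_j w_j \in C_1$ (with all $b_j\ge0$) lying in the set $\{y\in\mathbb{R}^m \mid y \in C_2 + [-R,R]^m\}$, one has $b_j < A$ for all $j$, provided the $w_j$ are linearly independent. -/

import Mathlib

open Set Pointwise

/-- Let `C₁, C₂` be polyhedral cones in `ℝᵐ` belonging to a common fan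
(so `C₁ ∩ C₂` is a face of each) with `C₁ ∩ C₂ = {0}`, and let `R > 0`.  If `C₁` is
strongly convex and generated by linearly independent vectors `w₁, …, w_k`, then there
is `A > 0` such that any `x = ∑ b_j w_j ∈ C₁` (all `b_j ≥ 0`) lying in
`C₂ + [-R,R]ᵐ` has `b_j < A` for all `j`. -/
theorem statement3 (m k : ℕ) (C₁ C₂ : Set (Fin m → ℝ))
    -- `C₂` is a closed, convex cone
    (hC₂cone : ∀ x ∈ C₂, ∀ t : ℝ, 0 ≤ t → t • x ∈ C₂)
    (hC₂conv : Convex ℝ C₂) (hC₂closed : IsClosed C₂)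
    -- the generators of `C₁`
    (w : Fin k → (Fin m → ℝ)) (hw : LinearIndependent ℝ w)
    (hC₁ : C₁ = {x | ∃ b : Fin k → ℝ, (∀ j, 0 ≤ b j) ∧ x = ∑ j, b j • w j})
    -- `C₁` is strongly convex
    (hC₁strong : ∀ x ∈ C₁, -x ∈ C₁ → x = 0)
    -- `C₁ ∩ C₂` is a face of each (they belong to a common fan) and equals `{0}`
    (hface₁ : ∃ φ : (Fin m → ℝ) →ₗ[ℝ] ℝ, (∀ x ∈ C₁, 0 ≤ φ x) ∧ C₁ ∩ C₂ = {x ∈ C₁ | φ x = 0})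
    (hface₂ : ∃ φ : (Fin m → ℝ) →ₗ[ℝ] ℝ, (∀ x ∈ C₂, 0 ≤ φ x) ∧ C₁ ∩ C₂ = {x ∈ C₂ | φ x = 0})
    (hmeet : C₁ ∩ C₂ = {0})
    (R : ℝ) (hR : 0 < R) :
    ∃ A : ℝ, 0 < A ∧ ∀ b : Fin k → ℝ, (∀ j, 0 ≤ b j) →
      (∑ j, b j • w j) ∈ C₂ + {y : Fin m → ℝ | ∀ i, |y i| ≤ R} →
      ∀ j, b j < A := by
  rcases Nat.eq_zero_or_pos k with hk | hk
  · subst hk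
    exact ⟨1, one_pos, fun b _ _ j => j.elim0⟩
  have hC₂ne : C₂.Nonempty := by
    refine ⟨0, ?_⟩
    have : (0 : Fin m → ℝ) ∈ C₁ ∩ C₂ := by rw [hmeet]; rfl
    exact this.2
  -- the compact set of normalized coefficient vectors
  set S : Set (Fin k → ℝ) := {c | (∀ j, 0 ≤ c j) ∧ ‖c‖ = 1} with hS
  have hScl : IsClosed S := by
    have : S = (⋂ j, {c : Fin k → ℝ | 0 ≤ c j}) ∩ {c : Fin k → ℝ | ‖c‖ = 1} := by
      ext c; simp [hS, mem_iInter]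
    rw [this]
    exact (isClosed_iInter fun j => isClosed_le continuous_const (continuous_apply j)).inter
      (isClosed_eq continuous_norm continuous_const)
  have hScompact : IsCompact S := by
    apply Metric.isCompact_of_isClosed_isBounded hScl
    apply Metric.isBounded_closedBall (x := (0 : Fin k → ℝ)) (r := 1) |>.subset
    intro c hc
    simp only [Metric.mem_closedBall, dist_zero_right]
    exact le_of_eq hc.2
  have hSne : S.Nonempty := by
    haveI : Nonempty (Fin k) := Fin.pos_iff_nonempty.mp hk
    refine ⟨fun _ => 1, fun j => zero_le_one, ?_⟩
    simp [pi_norm_const]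
  -- the distance function
  set f : (Fin k → ℝ) → ℝ := fun c => Metric.infDist (∑ j, c j • w j) C₂ with hf
  have hfcont : Continuous f :=
    (Metric.continuous_infDist_pt C₂).comp
      (continuous_finset_sum _ fun j _ => (continuous_apply j).smul continuous_const)
  obtain ⟨c₀, hc₀S, hmin'⟩ := hScompact.exists_isMinOn hSne hfcont.continuousOn
  have hmin : ∀ c ∈ S, f c₀ ≤ f c := fun c hc => hmin' hc
  set ε := f c₀ with hε
  have hεpos : 0 < ε := by
    rcases lt_or_eq_of_le (Metric.infDist_nonneg : 0 ≤ f c₀) with h | h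
    · exact h
    · exfalso
      have hmem : (∑ j, c₀ j • w j) ∈ C₂ :=
        (hC₂closed.mem_iff_infDist_zero hC₂ne).mpr h.symm
      have hmem1 : (∑ j, c₀ j • w j) ∈ C₁ := by
        rw [hC₁]; exact ⟨c₀, hc₀S.1, rfl⟩
      have hzero : (∑ j, c₀ j • w j) = 0 := by
        have : (∑ j, c₀ j • w j) ∈ C₁ ∩ C₂ := ⟨hmem1, hmem⟩
        rwa [hmeet, mem_singleton_iff] at this
      have hc₀0 : c₀ = 0 := by
        funext j
        exact linearIndependent_iff'.mp hw Finset.univ c₀ hzero j (Finset.mem_univ j)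
      rw [hc₀0] at hc₀S
      simpa using hc₀S.2
  refine ⟨R / ε + 1, by positivity, fun b hb hx j => ?_⟩
  obtain ⟨y, hy, z, hz, hxyz⟩ := hx
  set M := ‖b‖ with hM
  have hbj : b j ≤ M := (le_abs_self _).trans ((Real.norm_eq_abs (b j)) ▸ norm_le_pi_norm b j)
  rcases eq_or_lt_of_le (norm_nonneg b) with h0 | h0
  · have : b = 0 := norm_eq_zero.mp h0.symm
    rw [this]
    positivity
  · -- normalize
    have hMinv : 0 < M⁻¹ := inv_pos.mpr h0
    have hcS : M⁻¹ • b ∈ S := by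
      constructor
      · intro j; exact mul_nonneg hMinv.le (hb j)
      · rw [norm_smul, norm_inv, norm_norm]
        field_simp
    have key : ε ≤ M⁻¹ * R := by
      have h1 : ε ≤ f (M⁻¹ • b) := hmin _ hcS
      have h2 : (∑ j, (M⁻¹ • b) j • w j) = M⁻¹ • (∑ j, b j • w j) := by
        rw [Finset.smul_sum]
        exact Finset.sum_congr rfl fun j _ => by simp [smul_smul]
      have h3 : f (M⁻¹ • b) ≤ dist (M⁻¹ • ∑ j, b j • w j) (M⁻¹ • y) := by
        rw [hf]
        simp only [h2]
        exact Metric.infDist_le_dist_of_mem (hC₂cone y hy _ hMinv.le)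
      have h4 : dist (M⁻¹ • ∑ j, b j • w j) (M⁻¹ • y) = M⁻¹ * ‖z‖ := by
        rw [dist_eq_norm, ← smul_sub, norm_smul, norm_inv, Real.norm_eq_abs,
          abs_of_pos h0]
        congr 1
        rw [← hxyz]
        simp
      have h5 : ‖z‖ ≤ R := by
        rw [pi_norm_le_iff_of_nonneg hR.le]
        intro i
        exact (Real.norm_eq_abs (z i)).symm ▸ hz i
      calc ε ≤ dist (M⁻¹ • ∑ j, b j • w j) (M⁻¹ • y) := h1.trans h3
        _ = M⁻¹ * ‖z‖ := h4
        _ ≤ M⁻¹ * R := by nlinarith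
    have hMle : M ≤ R / ε := by
      rw [le_div_iff₀ hεpos]
      have := mul_le_mul_of_nonneg_left key h0.le
      rw [mul_comm M] at this ⊢
      calc ε * M ≤ M⁻¹ * R * M := by nlinarith
        _ = R := by field_simp; exact div_self (ne_of_gt h0)
    calc b j ≤ M := hbj
      _ ≤ R / ε := hMle
      _ < R / ε + 1 := lt_add_one _
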